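/- arXiv:math/0108074 — 2 statements merged into one kernel-verified Lean document; each statement's English description precedes it below -/
import Mathlib

section
/- Let A be an invertible m×m tridiagonal matrix whose leading principal minors D_1,…,D_{m-1} and trailing principal minors are all nonzero. With Λ_{i+1} = D_i/D_{i-1} and G_{i-1} equal to the ratio of trailing minors (from rows/columns i..m over i+1..m), the diagonal entries of A^{-1} are given by (A^{-1})_{ii} = (Λ_{i+1} + G_{i-1} − q_i)^{-1}. -/
/-- The `k`-th leading principal minor of an `m × m` matrix (`leadingMinor A 0 = 1`). -/
noncomputable def leadingMinor {m : ℕ} (A : Matrix (Fin m) (Fin m) ℝ) (k : ℕ) : ℝ :=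
  if h : k ≤ m then (A.submatrix (Fin.castLE h) (Fin.castLE h)).det else 0

/-- Determinant of the trailing submatrix of `A` on rows and columns `k, …, m`
(`1`-based indexing; `trailingMinor A (m+1) = 1`). -/
noncomputable def trailingMinor {m : ℕ} (A : Matrix (Fin m) (Fin m) ℝ) (k : ℕ) : ℝ :=
  if h : 1 ≤ k ∧ k ≤ m + 1 then
    (A.submatrix
        (fun i : Fin (m + 1 - k) => (⟨k - 1 + i, by have := i.isLt; omega⟩ : Fin m))
        (fun i : Fin (m + 1 - k) => (⟨k - 1 + i, by have := i.isLt; omega⟩ : Fin m))).det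
  else 0


noncomputable def tri (a b c : ℕ → ℝ) (n : ℕ) : Matrix (Fin n) (Fin n) ℝ :=
  Matrix.of fun i j =>
    if (i : ℕ) = j then a ((i : ℕ) + 1)
    else if (i : ℕ) = (j : ℕ) + 1 then b ((i : ℕ) + 1)
    else if (j : ℕ) = (i : ℕ) + 1 then c ((j : ℕ) + 1)
    else 0

noncomputable def triDet (a b c : ℕ → ℝ) (n : ℕ) : ℝ := (tri a b c n).det

def sh (s : ℕ) (f : ℕ → ℝ) : ℕ → ℝ := fun t => f (t + s)

lemma triDet_zero (a b c : ℕ → ℝ) : triDet a b c 0 = 1 := by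
  simp [triDet, Matrix.det_fin_zero]

lemma triDet_one (a b c : ℕ → ℝ) : triDet a b c 1 = a 1 := by
  simp [triDet, Matrix.det_fin_one, tri]

lemma tri_first (a b c : ℕ → ℝ) (n : ℕ) :
    triDet a b c (n + 2) = a 1 * triDet (sh 1 a) (sh 1 b) (sh 1 c) (n + 1)
      - b 2 * c 2 * triDet (sh 2 a) (sh 2 b) (sh 2 c) n := by
  rw [triDet, Matrix.det_succ_column_zero, Fin.sum_univ_succ, Fin.sum_univ_succ]
  have hz : ∀ i : Fin n, tri a b c (n + 2) i.succ.succ 0 = 0 := by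
    intro i
    simp only [tri, Matrix.of_apply, Fin.val_succ, Fin.val_zero]
    split_ifs <;> first | rfl | omega | exact ‹False›.elim
  have h00 : tri a b c (n + 2) 0 0 = a 1 := by simp [tri]
  have h10 : tri a b c (n + 2) 1 0 = b 2 := by
    simp only [tri, Matrix.of_apply, Fin.val_one, Fin.val_zero]
    norm_num
  have hM0 : (tri a b c (n + 2)).submatrix (Fin.succAbove 0) Fin.succ
      = tri (sh 1 a) (sh 1 b) (sh 1 c) (n + 1) := by
    ext i j
    simp only [Matrix.submatrix_apply, tri, Matrix.of_apply, Fin.succAbove_zero,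
      Fin.val_succ, sh]
    split_ifs <;> first | rfl | omega | exact ‹False›.elim
  have hM1 : ((tri a b c (n + 2)).submatrix (Fin.succAbove 1) Fin.succ).det
      = c 2 * triDet (sh 2 a) (sh 2 b) (sh 2 c) n := by
    rw [Matrix.det_succ_row_zero, Fin.sum_univ_succ]
    have hv0 : (((1 : Fin (n+2)).succAbove 0 : Fin (n+2)) : ℕ) = 0 := by
      simp [Fin.succAbove, Fin.lt_def]
    have hvs : ∀ i : Fin n, (((1 : Fin (n+2)).succAbove i.succ : Fin (n+2)) : ℕ) = (i : ℕ) + 2 := by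
      intro i
      simp [Fin.succAbove, Fin.lt_def]
    have hz2 : ∀ j : Fin n, (tri a b c (n + 2)).submatrix (Fin.succAbove 1) Fin.succ 0 j.succ = 0 := by
      intro j
      simp only [Matrix.submatrix_apply, tri, Matrix.of_apply, hv0, Fin.val_succ]
      split_ifs <;> first | rfl | omega | exact ‹False›.elim
    have h002 : (tri a b c (n + 2)).submatrix (Fin.succAbove 1) Fin.succ 0 0 = c 2 := by
      simp only [Matrix.submatrix_apply, tri, Matrix.of_apply, hv0, Fin.val_succ, Fin.val_zero]
      norm_num
    have hsub : ((tri a b c (n + 2)).submatrix (Fin.succAbove 1) Fin.succ).submatrix Fin.succ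
        (Fin.succAbove 0) = tri (sh 2 a) (sh 2 b) (sh 2 c) n := by
      ext i j
      simp only [Matrix.submatrix_apply, tri, Matrix.of_apply, Fin.succAbove_zero,
        Fin.val_succ, hvs, sh]
      split_ifs <;> first | rfl | omega | exact ‹False›.elim
    simp only [hz2, mul_zero, zero_mul, Finset.sum_const_zero, add_zero, h002]
    rw [show ((0:Fin (n+1)).succAbove : Fin n → Fin (n+1)) = Fin.succ from Fin.succAbove_zero] at *
    rw [hsub]
    simp [triDet]
  simp only [Fin.succ_zero_eq_one, hz, mul_zero, zero_mul, Finset.sum_const_zero, add_zero,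
    h00, h10, hM0, hM1]
  simp only [triDet, Fin.val_zero, Fin.val_one, pow_zero, pow_one]
  ring

lemma tri_last : ∀ (n : ℕ) (a b c : ℕ → ℝ), triDet a b c (n + 2)
    = a (n + 2) * triDet a b c (n + 1) - b (n + 2) * c (n + 2) * triDet a b c n := by
  intro n
  induction n using Nat.strong_induction_on with
  | _ n ih =>
    match n with
    | 0 =>
      intro a b c
      rw [tri_first, triDet_one, triDet_one, triDet_zero, triDet_zero]
      show a 1 * a 2 - b 2 * c 2 * 1 = a 2 * a 1 - b 2 * c 2 * 1
      ring
    | 1 =>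
      intro a b c
      rw [tri_first, tri_first, tri_first]
      norm_num [triDet_one, triDet_zero, sh]
      ring
    | (k + 2) =>
      intro a b c
      have e1 := tri_first a b c (k + 2)
      have e2 := ih (k + 1) (by omega) (sh 1 a) (sh 1 b) (sh 1 c)
      have e3 := ih k (by omega) (sh 2 a) (sh 2 b) (sh 2 c)
      have e4 := tri_first a b c (k + 1)
      have e5 := tri_first a b c k
      have h23 : k + 2 + 2 = k + 4 := by omega
      have h13 : k + 1 + 2 = k + 3 := by omega
      rw [h23] at e1
      rw [h13] at e2 e4
      have v1 : sh 1 a (k + 1 + 2) = a (k + 4) := by simp [sh]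
      have v2 : sh 1 b (k + 1 + 2) = b (k + 4) := by simp [sh]
      have v3 : sh 1 c (k + 1 + 2) = c (k + 4) := by simp [sh]
      have v4 : sh 2 a (k + 2) = a (k + 4) := by simp [sh]
      have v5 : sh 2 b (k + 2) = b (k + 4) := by simp [sh]
      have v6 : sh 2 c (k + 2) = c (k + 4) := by simp [sh]
      rw [h13, v1, v2, v3] at e2
      rw [v4, v5, v6] at e3
      rw [show k + 2 + 2 = k + 4 by omega, show k + 2 + 1 = k + 3 by omega,
        e1, e2, e3, e4, e5]
      ring


section Aux

variable {m : ℕ} (p q r : ℕ → ℝ) (A : Matrix (Fin m) (Fin m) ℝ)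
variable (hA : ∀ i j : Fin m, A i j =
      if (i : ℕ) = j then q ((i : ℕ) + 1)
      else if (i : ℕ) = (j : ℕ) + 1 then p ((i : ℕ) + 1)
      else if (j : ℕ) = (i : ℕ) + 1 then r ((j : ℕ) + 1)
      else 0)

include hA

lemma lead_eq (k : ℕ) (hk : k ≤ m) : leadingMinor A k = triDet q p r k := by
  rw [leadingMinor, dif_pos hk, triDet]
  congr 1
  ext i j
  simp only [Matrix.submatrix_apply, hA, tri, Matrix.of_apply, Fin.coe_castLE]

lemma trail_eq (k : ℕ) (hk1 : 1 ≤ k) (hk2 : k ≤ m + 1) :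
    trailingMinor A k = triDet (sh (k-1) q) (sh (k-1) p) (sh (k-1) r) (m + 1 - k) := by
  rw [trailingMinor, dif_pos ⟨hk1, hk2⟩, triDet]
  congr 1
  ext i j
  simp only [Matrix.submatrix_apply, hA, tri, Matrix.of_apply, sh]
  split_ifs <;> first | rfl | omega | (congr 1; omega) | exact ‹False›.elim

lemma minor_block {n : ℕ} (B : Matrix (Fin (n+1)) (Fin (n+1)) ℝ)
    (hB : ∀ i j : Fin (n+1), B i j =
      if (i : ℕ) = j then q ((i : ℕ) + 1)
      else if (i : ℕ) = (j : ℕ) + 1 then p ((i : ℕ) + 1)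
      else if (j : ℕ) = (i : ℕ) + 1 then r ((j : ℕ) + 1)
      else 0) (i : Fin (n+1)) :
    (B.submatrix i.succAbove i.succAbove).det
      = triDet q p r i * triDet (sh (i+1) q) (sh (i+1) p) (sh (i+1) r) (n - i) := by
  have hval : ∀ x : Fin n, ((i.succAbove x : Fin (n+1)) : ℕ)
      = if (x : ℕ) < (i : ℕ) then (x : ℕ) else (x : ℕ) + 1 := by
    intro x
    simp only [Fin.succAbove, Fin.lt_def, Fin.coe_castSucc]
    split_ifs <;> simp
  let f : Fin (i : ℕ) ⊕ Fin (n - (i : ℕ)) ≃ Fin n :=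
    finSumFinEquiv.trans (finCongr (by omega))
  have hfl : ∀ a : Fin (i : ℕ), ((f (Sum.inl a) : Fin n) : ℕ) = (a : ℕ) := by
    intro a; simp [f]
  have hfr : ∀ a : Fin (n - (i : ℕ)), ((f (Sum.inr a) : Fin n) : ℕ) = (i : ℕ) + a := by
    intro a; simp [f]
  have hL : ∀ a : Fin (i : ℕ), ((i.succAbove (f (Sum.inl a)) : Fin (n+1)) : ℕ) = (a : ℕ) := by
    intro a
    have h := hval (f (Sum.inl a))
    rw [hfl a] at h
    rw [h, if_pos a.isLt]
  have hR : ∀ a : Fin (n - (i : ℕ)),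
      ((i.succAbove (f (Sum.inr a)) : Fin (n+1)) : ℕ) = (i : ℕ) + (a : ℕ) + 1 := by
    intro a
    have h := hval (f (Sum.inr a))
    rw [hfr a] at h
    rw [h, if_neg (by omega)]
  have hdet := Matrix.det_submatrix_equiv_self f (B.submatrix i.succAbove i.succAbove)
  rw [← hdet]
  have hblocks : (B.submatrix i.succAbove i.succAbove).submatrix f f
      = Matrix.fromBlocks (tri q p r i) 0 0
          (tri (sh (i+1) q) (sh (i+1) p) (sh (i+1) r) (n - i)) := by
    ext x y
    cases x with
    | inl a => cases y with
      | inl b =>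
        have ha := a.isLt; have hb := b.isLt
        simp only [Matrix.submatrix_apply, hB, hL, Matrix.fromBlocks_apply₁₁,
          tri, Matrix.of_apply]
      | inr b =>
        have ha := a.isLt; have hb := b.isLt
        simp only [Matrix.submatrix_apply, hB, hL, hR, Matrix.fromBlocks_apply₁₂,
          Matrix.zero_apply]
        split_ifs <;> first | rfl | omega
    | inr a => cases y with
      | inl b =>
        have ha := a.isLt; have hb := b.isLt
        simp only [Matrix.submatrix_apply, hB, hL, hR, Matrix.fromBlocks_apply₂₁,
          Matrix.zero_apply]
        split_ifs <;> first | rfl | omega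
      | inr b =>
        have ha := a.isLt; have hb := b.isLt
        simp only [Matrix.submatrix_apply, hB, hL, hR, Matrix.fromBlocks_apply₂₂,
          tri, Matrix.of_apply, sh]
        split_ifs <;> first | rfl | omega | (congr 1; omega)
  rw [hblocks, Matrix.det_fromBlocks_zero₂₁, triDet, triDet]

end Aux

theorem stmt_4 (m : ℕ) (hm : 1 ≤ m)
    (p q r : ℕ → ℝ) (A : Matrix (Fin m) (Fin m) ℝ)
    (hA : ∀ i j : Fin m, A i j =
      if (i : ℕ) = j then q ((i : ℕ) + 1)
      else if (i : ℕ) = (j : ℕ) + 1 then p ((i : ℕ) + 1)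
      else if (j : ℕ) = (i : ℕ) + 1 then r ((j : ℕ) + 1)
      else 0)
    (hdet : IsUnit A.det)
    (hD : ∀ k : ℕ, k ≤ m → leadingMinor A k ≠ 0)
    (hE : ∀ k : ℕ, 1 ≤ k → k ≤ m + 1 → trailingMinor A k ≠ 0) :
    ∀ i : Fin m, A⁻¹ i i =
      (leadingMinor A ((i : ℕ) + 1) / leadingMinor A (i : ℕ)
        + trailingMinor A ((i : ℕ) + 1) / trailingMinor A ((i : ℕ) + 2)
        - q ((i : ℕ) + 1))⁻¹ := by
  obtain ⟨n, rfl⟩ : ∃ n, m = n + 1 := ⟨m - 1, by omega⟩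
  intro i
  have hDt : ∀ k, k ≤ n + 1 → leadingMinor A k = triDet q p r k :=
    fun k hk => lead_eq p q r A hA k hk
  have hEt : ∀ k, 1 ≤ k → k ≤ n + 2 → trailingMinor A k
      = triDet (sh (k-1) q) (sh (k-1) p) (sh (k-1) r) (n + 2 - k) := by
    intro k h1 h2
    rw [trail_eq p q r A hA k h1 (by omega)]
  have Erec : ∀ k, 1 ≤ k → k ≤ n + 1 → trailingMinor A k
      = q k * trailingMinor A (k+1) - p (k+1) * r (k+1) * trailingMinor A (k+2) := by
    intro k h1 h2
    by_cases hk : k = n + 1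
    · subst hk
      rw [hEt (n+1) (by omega) (by omega), show n+2-(n+1) = 1 by omega, triDet_one,
        hEt (n+1+1) (by omega) (by omega), show n+2-(n+1+1) = 0 by omega, triDet_zero,
        show (n+1+2 : ℕ) = n+3 by omega, trailingMinor, dif_neg (by omega)]
      show q (1 + (n+1-1)) = q (n+1) * 1 - p (n+1+1) * r (n+1+1) * 0
      rw [show 1 + (n+1-1) = n+1 by omega]
      ring
    · have s1 : ∀ f : ℕ → ℝ, sh 1 (sh (k-1) f) = sh k f := by
        intro f; funext t; show f (t+1+(k-1)) = f (t+k); congr 1; omega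
      have s2 : ∀ f : ℕ → ℝ, sh 2 (sh (k-1) f) = sh (k+1) f := by
        intro f; funext t; show f (t+2+(k-1)) = f (t+(k+1)); congr 1; omega
      have v1 : sh (k-1) q 1 = q k := by show q (1+(k-1)) = q k; congr 1; omega
      have v2 : sh (k-1) p 2 = p (k+1) := by show p (2+(k-1)) = p (k+1); congr 1; omega
      have v3 : sh (k-1) r 2 = r (k+1) := by show r (2+(k-1)) = r (k+1); congr 1; omega
      rw [hEt k h1 (by omega), hEt (k+1) (by omega) (by omega),
        hEt (k+2) (by omega) (by omega), show n+2-k = (n-k)+2 by omega, tri_first,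
        s1, s1, s1, s2, s2, s2, v1, v2, v3, show k+1-1 = k by omega,
        show k+2-1 = k+1 by omega, show n+2-(k+1) = (n-k)+1 by omega,
        show n+2-(k+2) = n-k by omega]
  have Drec : ∀ k, 2 ≤ k → k ≤ n + 1 → leadingMinor A k
      = q k * leadingMinor A (k-1) - p k * r k * leadingMinor A (k-2) := by
    intro k h1 h2
    rw [hDt k h2, hDt (k-1) (by omega), hDt (k-2) (by omega)]
    have h := tri_last (k-2) q p r
    rw [show k-2+2 = k by omega, show k-2+1 = k-1 by omega] at h
    exact h
  have key : ∀ t k, k + t = n + 1 → 1 ≤ k →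
      leadingMinor A k * trailingMinor A (k+1)
        - p (k+1) * r (k+1) * leadingMinor A (k-1) * trailingMinor A (k+2) = A.det := by
    intro t
    induction t with
    | zero =>
      intro k hk h1
      obtain rfl : k = n + 1 := by omega
      have hL : leadingMinor A (n+1) = A.det := by
        rw [leadingMinor, dif_pos le_rfl]
        congr 1
      have hT1 : trailingMinor A (n+1+1) = 1 := by
        rw [hEt (n+1+1) (by omega) (by omega), show n+2-(n+1+1) = 0 by omega, triDet_zero]
      have hT0 : trailingMinor A (n+1+2) = 0 := by
        rw [trailingMinor, dif_neg (by omega)]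
      rw [hL, hT1, hT0]
      ring
    | succ t ih =>
      intro k hk h1
      have ih' := ih (k+1) (by omega) (by omega)
      rw [Drec (k+1) (by omega) (by omega), show k+1-1 = k by omega,
        show k+1-2 = k-1 by omega] at ih'
      rw [Erec (k+1) (by omega) (by omega)]
      linear_combination ih'
  have hsplit := key (n + 1 - ((i:ℕ)+1)) ((i:ℕ)+1) (by omega) (by omega)
  rw [show (i:ℕ)+1-1 = (i:ℕ) by omega, show (i:ℕ)+1+1 = (i:ℕ)+2 by omega] at hsplit
  have hErec := Erec ((i:ℕ)+1) (by omega) (by omega)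
  rw [show (i:ℕ)+1+1 = (i:ℕ)+2 by omega, show (i:ℕ)+1+2 = (i:ℕ)+3 by omega] at hErec
  have hid : A.det = leadingMinor A ((i:ℕ)+1) * trailingMinor A ((i:ℕ)+2)
      + leadingMinor A (i:ℕ) * trailingMinor A ((i:ℕ)+1)
      - q ((i:ℕ)+1) * leadingMinor A (i:ℕ) * trailingMinor A ((i:ℕ)+2) := by
    rw [hErec]
    linear_combination -hsplit
  have hadj : A.adjugate i i = leadingMinor A (i:ℕ) * trailingMinor A ((i:ℕ)+2) := by
    have hzero : ∀ j : Fin (n+1), j ≠ i → (A.updateRow i (Pi.single i 1)) i j = 0 := by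
      intro j hj; simp [Matrix.updateRow_self, Pi.single_apply, hj]
    rw [Matrix.adjugate_apply, Matrix.det_succ_row _ i,
      Finset.sum_eq_single i (fun j _ hj => by rw [hzero j hj]; ring)
        (fun h => absurd (Finset.mem_univ i) h)]
    have hmain : (A.updateRow i (Pi.single i 1)) i i = 1 := by
      simp [Matrix.updateRow_self]
    have hsubm : (A.updateRow i (Pi.single i 1)).submatrix i.succAbove i.succAbove
        = A.submatrix i.succAbove i.succAbove := by
      ext a b
      simp [Matrix.submatrix_apply, Matrix.updateRow_ne (Fin.succAbove_ne i a)]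
    rw [hmain, hsubm, minor_block p q r A hA A hA i,
      show ((-1:ℝ))^((i:ℕ)+(i:ℕ)) = 1 from Even.neg_one_pow ⟨(i:ℕ), rfl⟩,
      ← hDt (i:ℕ) (by omega), hEt ((i:ℕ)+2) (by omega) (by omega),
      show (i:ℕ)+2-1 = (i:ℕ)+1 by omega, show n+2-((i:ℕ)+2) = n-(i:ℕ) by omega]
    ring
  have hDne : leadingMinor A (i:ℕ) ≠ 0 := hD (i:ℕ) (by omega)
  have hEne : trailingMinor A ((i:ℕ)+2) ≠ 0 := hE ((i:ℕ)+2) (by omega) (by omega)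
  have hdetne : A.det ≠ 0 := hdet.ne_zero
  have hratio : leadingMinor A ((i:ℕ)+1) / leadingMinor A (i:ℕ)
      + trailingMinor A ((i:ℕ)+1) / trailingMinor A ((i:ℕ)+2) - q ((i:ℕ)+1)
      = A.det / (leadingMinor A (i:ℕ) * trailingMinor A ((i:ℕ)+2)) := by
    rw [hid]
    field_simp
  rw [Matrix.inv_def, Matrix.smul_apply, hadj, Ring.inverse_eq_inv', smul_eq_mul,
    hratio, inv_div, div_eq_mul_inv, mul_comm]
end

section
/- Let A be an invertible m×m tridiagonal matrix with nonzero leading principal minors. Then for i > j, the entry (A^{-1})_{ij} equals (A^{-1})_{ii} · ∏_{ξ=j+1}^{i} (−p_ξ / Λ_ξ), where Λ_ξ = D_{ξ-1}/D_{ξ-2} is the ratio of consecutive leading principal minors and p_ξ is the subdiagonal entry A_{ξ,ξ-1}. -/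
open Matrix Finset in
private lemma det_last_two (n : ℕ) (M : Matrix (Fin (n+2)) (Fin (n+2)) ℝ)
    (hrow : ∀ j : Fin (n+2), (j:ℕ) < n → M (Fin.last (n+1)) j = 0)
    (hcol : ∀ i : Fin (n+2), (i:ℕ) < n → M i (Fin.last (n+1)) = 0) :
    M.det = M (Fin.last (n+1)) (Fin.last (n+1)) * (M.submatrix Fin.castSucc Fin.castSucc).det
      - M (Fin.last (n+1)) ⟨n, by omega⟩ * M ⟨n, by omega⟩ (Fin.last (n+1)) *
        (M.submatrix (Fin.castSucc ∘ Fin.castSucc) (Fin.castSucc ∘ Fin.castSucc)).det := by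
  set j0 : Fin (n+2) := ⟨n, by omega⟩ with hj0
  set j1 : Fin (n+2) := Fin.last (n+1) with hj1
  have hne : j0 ≠ j1 := by
    simp [hj0, hj1, Fin.ext_iff, Fin.last]
  have hsa : j0.succAbove (Fin.last n) = j1 := by
    simp [Fin.succAbove, hj0, hj1, Fin.ext_iff, Fin.lt_def, Fin.last]
  have hsa2 : ∀ c : Fin n, j0.succAbove c.castSucc = c.castSucc.castSucc := by
    intro c
    simp [Fin.succAbove, hj0, Fin.lt_def, c.isLt]
  have hC : (M.submatrix j1.succAbove j0.succAbove).det
      = M ⟨n, by omega⟩ j1 * (M.submatrix (Fin.castSucc ∘ Fin.castSucc)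
          (Fin.castSucc ∘ Fin.castSucc)).det := by
    rw [det_succ_column (M.submatrix j1.succAbove j0.succAbove) (Fin.last n)]
    rw [Finset.sum_eq_single (Fin.last n)]
    · rw [Fin.succAbove_last]
      simp only [submatrix_apply, hsa, Fin.succAbove_last, submatrix_submatrix]
      have hev : (-1 : ℝ) ^ ((Fin.last n : ℕ) + (Fin.last n : ℕ)) = 1 :=
        Even.neg_one_pow ⟨(Fin.last n : ℕ), by ring⟩
      rw [hev, one_mul]
      have hmat : M.submatrix (Fin.castSucc ∘ Fin.castSucc) (j0.succAbove ∘ Fin.castSucc)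
          = M.submatrix (Fin.castSucc ∘ Fin.castSucc) (Fin.castSucc ∘ Fin.castSucc) := by
        apply Matrix.ext; intro a b; simp [hsa2]
      rw [hmat]
      rfl
    · intro b _ hb
      rw [Fin.succAbove_last, submatrix_apply, hsa]
      have : M (Fin.castSucc b) j1 = 0 := by
        apply hcol
        have := b.isLt
        have hbv : (b : ℕ) ≠ n := by
          simpa [Fin.ext_iff, Fin.last] using hb
        simp [Fin.castSucc]; omega
      simp [this]
    · simp
  rw [det_succ_row M j1]
  have hzero : ∀ j ∈ (Finset.univ : Finset (Fin (n+2))), j ∉ ({j0, j1} : Finset (Fin (n+2))) →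
      (-1:ℝ) ^ ((j1:ℕ) + (j:ℕ)) * M j1 j * (M.submatrix j1.succAbove j.succAbove).det = 0 := by
    intro j _ hj
    simp only [Finset.mem_insert, Finset.mem_singleton] at hj
    push_neg at hj
    have : M j1 j = 0 := by
      apply hrow
      have := j.isLt
      have h1 : (j:ℕ) ≠ n := fun h => hj.1 (by simp [hj0, Fin.ext_iff, h])
      have h2 : (j:ℕ) ≠ n+1 := fun h => hj.2 (by simp [hj1, Fin.ext_iff, Fin.last, h])
      omega
    simp [this]
  rw [← Finset.sum_subset (Finset.subset_univ ({j0, j1} : Finset (Fin (n+2)))) hzero]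
  rw [Finset.sum_pair hne]
  rw [hC, Fin.succAbove_last]
  have h1 : (-1:ℝ) ^ ((j1:ℕ) + (j1:ℕ)) = 1 :=
    Even.neg_one_pow ⟨(j1:ℕ), by ring⟩
  have h2 : (-1:ℝ) ^ ((j1:ℕ) + (j0:ℕ)) = -1 := by
    have : (j1:ℕ) + (j0:ℕ) = 2*n+1 := by simp [hj0, hj1, Fin.last]; omega
    rw [this, pow_succ, pow_mul]; norm_num
  rw [h1, h2]
  ring

open Matrix Finset in
private lemma minor_rec (m : ℕ) (p q r : ℕ → ℝ) (A : Matrix (Fin m) (Fin m) ℝ)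
    (hA : ∀ i j : Fin m, A i j =
      if (i : ℕ) = j then q ((i : ℕ) + 1)
      else if (i : ℕ) = (j : ℕ) + 1 then p ((i : ℕ) + 1)
      else if (j : ℕ) = (i : ℕ) + 1 then r ((j : ℕ) + 1)
      else 0)
    (k : ℕ) (hk : k + 2 ≤ m) :
    leadingMinor A (k+2) = q (k+2) * leadingMinor A (k+1)
      - p (k+2) * r (k+2) * leadingMinor A k := by
  have hk1 : k + 1 ≤ m := by omega
  have hk0 : k ≤ m := by omega
  rw [leadingMinor, leadingMinor, leadingMinor, dif_pos hk, dif_pos hk1, dif_pos hk0]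
  set B := A.submatrix (Fin.castLE hk) (Fin.castLE hk) with hB
  have hrow : ∀ j : Fin (k+2), (j:ℕ) < k → B (Fin.last (k+1)) j = 0 := by
    intro j hj
    rw [hB, submatrix_apply, hA]
    have : ((Fin.castLE hk (Fin.last (k+1))) : ℕ) = k+1 := rfl
    simp only [this, Fin.coe_castLE]
    have hj2 : (j:ℕ) < k := hj
    rw [if_neg (by omega), if_neg (by omega), if_neg (by omega)]
  have hcol : ∀ i : Fin (k+2), (i:ℕ) < k → B i (Fin.last (k+1)) = 0 := by
    intro i hi
    rw [hB, submatrix_apply, hA]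
    have : ((Fin.castLE hk (Fin.last (k+1))) : ℕ) = k+1 := rfl
    simp only [this, Fin.coe_castLE]
    rw [if_neg (by omega), if_neg (by omega), if_neg (by omega)]
  rw [det_last_two k B hrow hcol]
  have e1 : B (Fin.last (k+1)) (Fin.last (k+1)) = q (k+2) := by
    rw [hB, submatrix_apply, hA]; simp [Fin.last]
  have e2 : B (Fin.last (k+1)) ⟨k, by omega⟩ = p (k+2) := by
    rw [hB, submatrix_apply, hA]
    have h1 : ((Fin.castLE hk (Fin.last (k+1))) : ℕ) = k+1 := rfl
    have h2 : ((Fin.castLE hk (⟨k, by omega⟩ : Fin (k+2))) : ℕ) = k := rfl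
    rw [h1, h2, if_neg (by omega), if_pos rfl]
  have e3 : B ⟨k, by omega⟩ (Fin.last (k+1)) = r (k+2) := by
    rw [hB, submatrix_apply, hA]
    have h1 : ((Fin.castLE hk (Fin.last (k+1))) : ℕ) = k+1 := rfl
    have h2 : ((Fin.castLE hk (⟨k, by omega⟩ : Fin (k+2))) : ℕ) = k := rfl
    rw [h1, h2, if_neg (by omega), if_neg (by omega), if_pos rfl]
  have e4 : B.submatrix Fin.castSucc Fin.castSucc
      = A.submatrix (Fin.castLE hk1) (Fin.castLE hk1) := by
    apply Matrix.ext; intro a b; rfl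
  have e5 : B.submatrix (Fin.castSucc ∘ Fin.castSucc) (Fin.castSucc ∘ Fin.castSucc)
      = A.submatrix (Fin.castLE hk0) (Fin.castLE hk0) := by
    apply Matrix.ext; intro a b; rfl
  rw [e1, e2, e3, e4, e5]

open Matrix Finset in
theorem stmt_5 (m : ℕ)
    (p q r : ℕ → ℝ) (A : Matrix (Fin m) (Fin m) ℝ)
    (hA : ∀ i j : Fin m, A i j =
      if (i : ℕ) = j then q ((i : ℕ) + 1)
      else if (i : ℕ) = (j : ℕ) + 1 then p ((i : ℕ) + 1)
      else if (j : ℕ) = (i : ℕ) + 1 then r ((j : ℕ) + 1)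
      else 0)
    (hD : ∀ k : ℕ, 1 ≤ k → k ≤ m → leadingMinor A k ≠ 0) :
    ∀ i j : Fin m, j < i →
      A⁻¹ i j = A⁻¹ i i *
        ∏ ξ ∈ Finset.Icc ((j : ℕ) + 2) ((i : ℕ) + 1),
          (-(p ξ) / (leadingMinor A (ξ - 1) / leadingMinor A (ξ - 2))) := by
  intro i j hij
  have hm : 0 < m := i.pos
  -- determinant of A is the m-th leading minor
  have hdetA : A.det = leadingMinor A m := by
    rw [leadingMinor, dif_pos (le_refl m)]
    have hid : Fin.castLE (le_refl m) = (id : Fin m → Fin m) := funext fun x => Fin.ext rfl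
    rw [hid, Matrix.submatrix_id_id]
  have hdet : IsUnit A.det := by
    rw [hdetA]
    exact isUnit_iff_ne_zero.mpr (hD m hm (le_refl m))
  have hinv : ∀ jj : Fin m, (∑ k, A⁻¹ i k * A k jj) = if i = jj then 1 else 0 := by
    intro jj
    have h1 : (A⁻¹ * A) i jj = if i = jj then 1 else 0 := by
      rw [Matrix.nonsing_inv_mul A hdet, Matrix.one_apply]
    rw [Matrix.mul_apply] at h1
    exact h1
  set v : ℕ → ℝ := fun n => if h : n < m then A⁻¹ i ⟨n, h⟩ else 0 with hv
  -- the three-term recurrence extraction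
  have hlm0 : leadingMinor A 0 = 1 := by
    rw [leadingMinor, dif_pos (Nat.zero_le m)]
    exact det_fin_zero
  have hlm1 : leadingMinor A 1 = q 1 := by
    rw [leadingMinor, dif_pos (show (1:ℕ) ≤ m from hm)]
    rw [det_fin_one, submatrix_apply, hA]
    simp
  -- key recurrence
  have key : ∀ jn : ℕ, jn < (i : ℕ) →
      leadingMinor A (jn + 1) * v jn = -(leadingMinor A jn * p (jn + 2) * v (jn + 1)) := by
    intro jn
    induction jn with
    | zero =>
      intro hlt
      have h1m : 1 < m := by omega
      have hS := hinv ⟨0, hm⟩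
      have hine : i ≠ (⟨0, hm⟩ : Fin m) := by
        intro h
        rw [Fin.ext_iff] at h
        simp only [Fin.val_mk] at h
        omega
      rw [if_neg hine] at hS
      -- sum is supported on {0, 1}
      have hzero : ∀ k ∈ (Finset.univ : Finset (Fin m)),
          k ∉ ({⟨0, hm⟩, ⟨1, h1m⟩} : Finset (Fin m)) → A⁻¹ i k * A k ⟨0, hm⟩ = 0 := by
        intro k _ hk
        simp only [Finset.mem_insert, Finset.mem_singleton, Fin.ext_iff, Fin.val_mk] at hk
        push_neg at hk
        have : A k ⟨0, hm⟩ = 0 := by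
          rw [hA]; simp only [Fin.val_mk]
          rw [if_neg (by omega), if_neg (by omega), if_neg (by omega)]
        rw [this, mul_zero]
      rw [← Finset.sum_subset (Finset.subset_univ _) hzero] at hS
      rw [Finset.sum_pair (by simp [Fin.ext_iff])] at hS
      have ha1 : A ⟨0, hm⟩ ⟨0, hm⟩ = q 1 := by rw [hA]; simp
      have ha2 : A ⟨1, h1m⟩ ⟨0, hm⟩ = p 2 := by
        rw [hA]; simp only [Fin.val_mk]; norm_num
      rw [ha1, ha2] at hS
      have hv0 : v 0 = A⁻¹ i ⟨0, hm⟩ := dif_pos hm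
      have hv1 : v 1 = A⁻¹ i ⟨1, h1m⟩ := dif_pos h1m
      rw [hlm1, hlm0, hv0, hv1]
      linarith
    | succ n IH =>
      intro hlt
      have hIH := IH (by omega)
      have hn2 : n + 2 < m := by omega
      have hn1 : n + 1 < m := by omega
      have hnm : n < m := by omega
      have hS := hinv ⟨n + 1, hn1⟩
      have hine : i ≠ (⟨n + 1, hn1⟩ : Fin m) := by
        intro h
        rw [Fin.ext_iff] at h
        simp only [Fin.val_mk] at h
        omega
      rw [if_neg hine] at hS
      have hzero : ∀ k ∈ (Finset.univ : Finset (Fin m)),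
          k ∉ ({⟨n, hnm⟩, ⟨n + 1, hn1⟩, ⟨n + 2, hn2⟩} : Finset (Fin m)) →
            A⁻¹ i k * A k ⟨n + 1, hn1⟩ = 0 := by
        intro k _ hk
        simp only [Finset.mem_insert, Finset.mem_singleton, Fin.ext_iff, Fin.val_mk] at hk
        push_neg at hk
        have : A k ⟨n + 1, hn1⟩ = 0 := by
          rw [hA]; simp only [Fin.val_mk]
          rw [if_neg (by omega), if_neg (by omega), if_neg (by omega)]
        rw [this, mul_zero]
      rw [← Finset.sum_subset (Finset.subset_univ _) hzero] at hS
      rw [Finset.sum_insert (by simp [Fin.ext_iff]),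
        Finset.sum_pair (by simp [Fin.ext_iff])] at hS
      have ha1 : A ⟨n, hnm⟩ ⟨n + 1, hn1⟩ = r (n + 2) := by
        rw [hA]; simp only [Fin.val_mk]; norm_num
        intro h; exact absurd h (by omega)
      have ha2 : A ⟨n + 1, hn1⟩ ⟨n + 1, hn1⟩ = q (n + 2) := by
        rw [hA]; simp only [Fin.val_mk]; norm_num
      have ha3 : A ⟨n + 2, hn2⟩ ⟨n + 1, hn1⟩ = p (n + 3) := by
        rw [hA]; simp only [Fin.val_mk]; norm_num
      rw [ha1, ha2, ha3] at hS
      have hvn : v n = A⁻¹ i ⟨n, hnm⟩ := dif_pos hnm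
      have hvn1 : v (n + 1) = A⁻¹ i ⟨n + 1, hn1⟩ := dif_pos hn1
      have hvn2 : v (n + 2) = A⁻¹ i ⟨n + 2, hn2⟩ := dif_pos hn2
      rw [← hvn, ← hvn1, ← hvn2] at hS
      have hM := minor_rec m p q r A hA n (by omega)
      linear_combination (v (n + 1)) * hM + (leadingMinor A (n + 1)) * hS
        - (r (n + 2)) * hIH
  -- step lemma with division
  have step : ∀ jn : ℕ, jn < (i : ℕ) →
      v jn = v (jn + 1) *
        (-(p (jn + 2)) / (leadingMinor A (jn + 1) / leadingMinor A jn)) := by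
    intro jn hlt
    have hD1 : leadingMinor A (jn + 1) ≠ 0 := hD (jn + 1) (by omega) (by omega)
    have hD0 : leadingMinor A jn ≠ 0 := by
      cases jn with
      | zero => rw [hlm0]; norm_num
      | succ n => exact hD (n + 1) (by omega) (by omega)
    have hk := key jn hlt
    rw [div_div_eq_mul_div, ← mul_div_assoc, eq_div_iff hD1]
    linear_combination hk
  -- telescoping
  have tel : ∀ d : ℕ, ∀ jn : ℕ, jn + d + 1 = (i : ℕ) →
      v jn = v (i : ℕ) * ∏ ξ ∈ Finset.Icc (jn + 2) ((i : ℕ) + 1),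
        (-(p ξ) / (leadingMinor A (ξ - 1) / leadingMinor A (ξ - 2))) := by
    intro d
    induction d with
    | zero =>
      intro jn hjn
      have : (i : ℕ) + 1 = jn + 2 := by omega
      rw [this, Finset.Icc_self, Finset.prod_singleton]
      have h1 : jn + 2 - 1 = jn + 1 := by omega
      have h2 : jn + 2 - 2 = jn := by omega
      rw [h1, h2]
      have : (i : ℕ) = jn + 1 := by omega
      rw [this]
      exact step jn (by omega)
    | succ d IH =>
      intro jn hjn
      have hins : Finset.Icc (jn + 2) ((i : ℕ) + 1)
          = insert (jn + 2) (Finset.Icc (jn + 3) ((i : ℕ) + 1)) := by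
        apply Finset.ext; intro x
        simp only [Finset.mem_Icc, Finset.mem_insert]
        omega
      rw [hins, Finset.prod_insert (by simp)]
      have h1 : jn + 2 - 1 = jn + 1 := by omega
      have h2 : jn + 2 - 2 = jn := by omega
      rw [h1, h2]
      have hIH := IH (jn + 1) (by omega)
      rw [step jn (by omega), hIH]
      ring
  -- conclude
  have hvj : v ((j : ℕ)) = A⁻¹ i j := by
    have h1 : v ((j : ℕ)) = A⁻¹ i ⟨(j : ℕ), j.isLt⟩ := dif_pos j.isLt
    rw [h1, Fin.eta]
  have hvi : v ((i : ℕ)) = A⁻¹ i i := by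
    have h1 : v ((i : ℕ)) = A⁻¹ i ⟨(i : ℕ), i.isLt⟩ := dif_pos i.isLt
    rw [h1, Fin.eta]
  rw [← hvj, tel ((i : ℕ) - (j : ℕ) - 1) (j : ℕ) (by omega), hvi]
end
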